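/- Monotonicity of the self-similar Lyapunov functional: with ψ(s,y) as above supported in {|y| ≤ 1}, define Ẽ(s) = (1/2) ∫_{B₁} [ |∂_s ψ|² + |∇_y ψ|² − |y·∇_y ψ|² ] (1−|y|²)^{−1/2} dy. Then for 0 ≤ s₁ < s₂ one has Ẽ(s₂) − Ẽ(s₁) = ∫_{s₁}^{s₂} ∫_{B₁} |∂_s ψ|² (1−|y|²)^{−3/2} dy ds; in particular Ẽ is non-decreasing. -/

import Mathlib

open MeasureTheory
open scoped RealInnerProductSpace

noncomputable section

abbrev E2 : Type := EuclideanSpace ℝ (Fin 2)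
abbrev Em (m : ℕ) : Type := EuclideanSpace ℝ (Fin (m+1))

noncomputable def ptD {F : Type*} [NormedAddCommGroup F] [NormedSpace ℝ F]
    (u : ℝ × E2 → F) (p : ℝ × E2) : F :=
  fderiv ℝ u p (1, 0)

noncomputable def pxD {F : Type*} [NormedAddCommGroup F] [NormedSpace ℝ F]
    (i : Fin 2) (u : ℝ × E2 → F) (p : ℝ × E2) : F :=
  fderiv ℝ u p (0, EuclideanSpace.single i (1:ℝ))

noncomputable def boxD {F : Type*} [NormedAddCommGroup F] [NormedSpace ℝ F]
    (u : ℝ × E2 → F) (p : ℝ × E2) : F :=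
  -(ptD (fun q => ptD u q) p) + ∑ i : Fin 2, pxD i (fun q => pxD i u q) p

noncomputable def nullf (m : ℕ) (φ : ℝ × E2 → Em m) (p : ℝ × E2) : ℝ :=
  -⟪ptD φ p, ptD φ p⟫ + ∑ i : Fin 2, ⟪pxD i φ p, pxD i φ p⟫

noncomputable def eden (m : ℕ) (φ : ℝ × E2 → Em m) (t : ℝ) (x : E2) : ℝ :=
  ‖ptD φ (t, x)‖^2 + ∑ i : Fin 2, ‖pxD i φ (t, x)‖^2

/-- The self-similar weight `ρ(y) = (1−|y|²)^{−1/2}`. -/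
noncomputable def rho (y : E2) : ℝ := (1 - ‖y‖^2) ^ (-(1/2) : ℝ)

/-- The self-similar Lyapunov functional
`Ẽ(s) = (1/2)∫_{B₁} [|∂_sψ|² + |∇_yψ|² − |y·∇_yψ|²](1−|y|²)^{−1/2} dy`. -/
noncomputable def lyap (m : ℕ) (ψf : ℝ × E2 → Em m) (s : ℝ) : ℝ :=
  (1/2 : ℝ) * ∫ y in Metric.ball (0:E2) 1,
    (‖ptD ψf (s, y)‖^2 + ∑ i : Fin 2, ‖pxD i ψf (s, y)‖^2
      - ‖∑ i : Fin 2, y i • pxD i ψf (s, y)‖^2) * rho y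

/-- The flux density `∫_{B₁} |∂_sψ|² (1−|y|²)^{−3/2} dy`. -/
noncomputable def fluxDen (m : ℕ) (ψf : ℝ × E2 → Em m) (s : ℝ) : ℝ :=
  ∫ y in Metric.ball (0:E2) 1, ‖ptD ψf (s, y)‖^2 * (1 - ‖y‖^2) ^ (-(3/2) : ℝ)

/-! ### Auxiliary definitions -/

/-- the weight `(1-|y|^2)^{-3/2}` -/
noncomputable def kap (y : E2) : ℝ := (1 - ‖y‖^2) ^ (-(3/2) : ℝ)

/-- The flux field appearing on the right-hand side of the wave maps equation. -/
noncomputable def Gfn (m : ℕ) (ψf : ℝ × E2 → Em m) (i : Fin 2) : ℝ × E2 → Em m :=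
  fun q : ℝ × E2 => rho q.2 • pxD i ψf q
    - (rho q.2 * q.2 i) • ∑ l : Fin 2, q.2 l • pxD l ψf q

/-- Half the `s`-derivative of the Lyapunov density. -/
noncomputable def Fd (m : ℕ) (ψf : ℝ × E2 → Em m) (s : ℝ) (y : E2) : ℝ :=
  (⟪ptD (fun q => ptD ψf q) (s, y), ptD ψf (s, y)⟫
    + ∑ i : Fin 2, ⟪pxD i (fun q => ptD ψf q) (s, y), pxD i ψf (s, y)⟫
    - ⟪∑ i : Fin 2, y i • pxD i (fun q => ptD ψf q) (s, y),
        ∑ i : Fin 2, y i • pxD i ψf (s, y)⟫) * rho y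

/-- The Lyapunov density (inner-product form). -/
noncomputable def Ld (m : ℕ) (ψf : ℝ × E2 → Em m) (s : ℝ) (y : E2) : ℝ :=
  (⟪ptD ψf (s, y), ptD ψf (s, y)⟫
    + ∑ i : Fin 2, ⟪pxD i ψf (s, y), pxD i ψf (s, y)⟫
    - ⟪∑ i : Fin 2, y i • pxD i ψf (s, y), ∑ i : Fin 2, y i • pxD i ψf (s, y)⟫) * rho y

/-! ### Generic calculus helpers -/

lemma contDiff_fderiv_apply {F : Type*} [NormedAddCommGroup F] [NormedSpace ℝ F]
    (u : ℝ × E2 → F) (hu : ContDiff ℝ (⊤ : ℕ∞) u) (v : ℝ × E2) :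
    ContDiff ℝ (⊤ : ℕ∞) (fun q => fderiv ℝ u q v) :=
  (ContinuousLinearMap.apply ℝ F v).contDiff.comp (hu.fderiv_right (by exact_mod_cast le_top))

lemma hasFDerivAt_slice {F : Type*} [NormedAddCommGroup F] [NormedSpace ℝ F] (u : ℝ × E2 → F)
    (s : ℝ) (y : E2) (hu : DifferentiableAt ℝ u (s, y)) :
    HasFDerivAt (fun z => u (s, z))
      ((fderiv ℝ u (s, y)).comp (ContinuousLinearMap.inr ℝ ℝ E2)) y := by
  have h : HasFDerivAt (fun z : E2 => ((s : ℝ), z)) (ContinuousLinearMap.inr ℝ ℝ E2) y :=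
    HasFDerivAt.prodMk (hasFDerivAt_const s y) (hasFDerivAt_id y)
  exact (hu.hasFDerivAt.comp y h :)

lemma fderiv_slice {F : Type*} [NormedAddCommGroup F] [NormedSpace ℝ F] (u : ℝ × E2 → F)
    (s : ℝ) (y : E2) (hu : DifferentiableAt ℝ u (s, y)) (v : E2) :
    fderiv ℝ (fun z => u (s, z)) y v = fderiv ℝ u (s, y) (0, v) :=
  congrFun (congrArg _ (hasFDerivAt_slice u s y hu).fderiv) v

lemma hasDerivAt_sliceT {F : Type*} [NormedAddCommGroup F] [NormedSpace ℝ F] (u : ℝ × E2 → F)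
    (s : ℝ) (y : E2) (hu : DifferentiableAt ℝ u (s, y)) :
    HasDerivAt (fun t => u (t, y)) (fderiv ℝ u (s, y) (1, 0)) s := by
  have h : HasDerivAt (fun t : ℝ => (t, y)) ((1 : ℝ), (0 : E2)) s :=
    HasDerivAt.prodMk (hasDerivAt_id s) (hasDerivAt_const s y)
  simpa [Function.comp_def] using (hu.hasFDerivAt.comp_hasDerivAt s h :)

lemma fderiv_swap {F : Type*} [NormedAddCommGroup F] [NormedSpace ℝ F] (u : ℝ × E2 → F)
    (hu : ContDiff ℝ (⊤ : ℕ∞) u) (p v w : ℝ × E2) :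
    fderiv ℝ (fun q => fderiv ℝ u q w) p v = fderiv ℝ (fun q => fderiv ℝ u q v) p w := by
  have hd : ∀ x, HasFDerivAt u (fderiv ℝ u x) x := fun x =>
    (hu.differentiable (by simp) x).hasFDerivAt
  have hd2 : HasFDerivAt (fderiv ℝ u) (fderiv ℝ (fderiv ℝ u) p) p :=
    (((hu.fderiv_right (m := (⊤ : ℕ∞)) (by exact_mod_cast le_top)).differentiable
      (by simp)) p).hasFDerivAt
  have hsym := second_derivative_symmetric hd hd2 v w
  have h1 : fderiv ℝ (fun q => fderiv ℝ u q w) p v = fderiv ℝ (fderiv ℝ u) p v w := by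
    have : HasFDerivAt (fun q => fderiv ℝ u q w)
        ((ContinuousLinearMap.apply ℝ F w).comp (fderiv ℝ (fderiv ℝ u) p)) p :=
      ((ContinuousLinearMap.apply ℝ F w).hasFDerivAt.comp p hd2 :)
    rw [this.fderiv]; rfl
  have h2 : fderiv ℝ (fun q => fderiv ℝ u q v) p w = fderiv ℝ (fderiv ℝ u) p w v := by
    have : HasFDerivAt (fun q => fderiv ℝ u q v)
        ((ContinuousLinearMap.apply ℝ F v).comp (fderiv ℝ (fderiv ℝ u) p)) p :=
      ((ContinuousLinearMap.apply ℝ F v).hasFDerivAt.comp p hd2 :)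
    rw [this.fderiv]; rfl
  rw [h1, h2]; exact hsym

lemma ptD_pxD_comm {F : Type*} [NormedAddCommGroup F] [NormedSpace ℝ F] (u : ℝ × E2 → F)
    (hu : ContDiff ℝ (⊤ : ℕ∞) u) (i : Fin 2) (p : ℝ × E2) :
    ptD (fun q => pxD i u q) p = pxD i (fun q => ptD u q) p :=
  fderiv_swap u hu p (1, 0) (0, EuclideanSpace.single i (1:ℝ))

lemma norm_sq_hasFDerivAt (y : E2) :
    HasFDerivAt (fun z : E2 => ‖z‖^2) (2 • (innerSL ℝ y)) y := by
  have h := (hasFDerivAt_id y).inner ℝ (hasFDerivAt_id y)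
  simp only [id_eq] at h
  have h2 : (fun z : E2 => ⟪z, z⟫) = fun z : E2 => ‖z‖^2 := by
    funext z; exact real_inner_self_eq_norm_sq z
  rw [h2] at h
  refine HasFDerivAt.congr_fderiv h (Eq.symm ?_)
  ext v
  simp [real_inner_comm, two_smul]

lemma hasFDerivAt_rho {y : E2} (hy : ‖y‖ < 1) :
    HasFDerivAt rho (kap y • (innerSL ℝ y)) y := by
  have hpos : 0 < 1 - ‖y‖^2 := by nlinarith [norm_nonneg y]
  have hbase : HasFDerivAt (fun z : E2 => 1 - ‖z‖^2)
      ((0 : E2 →L[ℝ] ℝ) - 2 • (innerSL ℝ y)) y :=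
    (hasFDerivAt_const (1:ℝ) y).sub (norm_sq_hasFDerivAt y)
  have hr : HasDerivAt (fun t : ℝ => t ^ (-(1/2) : ℝ))
      ((-(1/2) : ℝ) * (1 - ‖y‖^2) ^ ((-(1/2) : ℝ) - 1)) (1 - ‖y‖^2) :=
    Real.hasDerivAt_rpow_const (Or.inl hpos.ne')
  have := hr.comp_hasFDerivAt y hbase
  refine HasFDerivAt.congr_fderiv this (Eq.symm ?_)
  ext v
  have h32 : ((-(1/2) : ℝ) - 1) = (-(3/2) : ℝ) := by norm_num
  simp [kap, h32]
  ring

lemma contDiffAt_rho {y : E2} (hy : ‖y‖ < 1) : ContDiffAt ℝ (⊤ : ℕ∞) rho y := by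
  have hpos : 0 < 1 - ‖y‖^2 := by nlinarith [norm_nonneg y]
  have h1 : ContDiffAt ℝ (⊤ : ℕ∞) (fun t : ℝ => t ^ (-(1/2) : ℝ)) (1 - ‖y‖^2) :=
    Real.contDiffAt_rpow_const_of_ne hpos.ne'
  have h2 : ContDiffAt ℝ (⊤ : ℕ∞) (fun z : E2 => 1 - ‖z‖^2) y := by
    have : ContDiff ℝ (⊤ : ℕ∞) (fun z : E2 => 1 - ‖z‖^2) := by
      have hin : ContDiff ℝ (⊤ : ℕ∞) (fun z : E2 => ⟪z, z⟫) :=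
        contDiff_id.inner ℝ contDiff_id
      have : (fun z : E2 => (1:ℝ) - ‖z‖^2) = fun z : E2 => 1 - ⟪z, z⟫ := by
        funext z; rw [real_inner_self_eq_norm_sq]
      rw [this]
      exact contDiff_const.sub hin
    exact this.contDiffAt
  exact h1.comp y h2

lemma rho_pos {y : E2} (hy : ‖y‖ < 1) : 0 < rho y := by
  have hpos : 0 < 1 - ‖y‖^2 := by nlinarith [norm_nonneg y]
  exact Real.rpow_pos_of_pos hpos _

lemma kap_pos {y : E2} (hy : ‖y‖ < 1) : 0 < kap y := by
  have hpos : 0 < 1 - ‖y‖^2 := by nlinarith [norm_nonneg y]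
  exact Real.rpow_pos_of_pos hpos _

lemma rho_eq_kap {y : E2} (hy : ‖y‖ < 1) : rho y = (1 - ‖y‖^2) * kap y := by
  have hpos : 0 < 1 - ‖y‖^2 := by nlinarith [norm_nonneg y]
  rw [rho, kap, ← Real.rpow_one_add' hpos.le (by norm_num)]
  norm_num

lemma ev_zero {α : Type*} [Zero α] {r0 : ℝ} {f : E2 → α}
    (h0 : ∀ z : E2, r0 ≤ ‖z‖ → f z = 0) {y : E2} (hy : r0 < ‖y‖) :
    f =ᶠ[nhds y] (fun _ => (0:α)) := by
  filter_upwards [eventually_norm_sub_lt y (show 0 < ‖y‖ - r0 by linarith)] with z hz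
  apply h0
  have h1 : ‖y‖ - ‖z‖ ≤ ‖y - z‖ := by simpa using norm_sub_norm_le y z
  rw [norm_sub_rev] at hz
  linarith

lemma glue_cont {r0 : ℝ} (hr01 : r0 < 1) {α : Type*} [NormedAddCommGroup α] (f : E2 → α)
    (hc : ∀ y : E2, ‖y‖ < 1 → ContinuousAt f y)
    (h0 : ∀ z : E2, r0 ≤ ‖z‖ → f z = 0) : Continuous f := by
  rw [continuous_iff_continuousAt]
  intro y
  rcases lt_or_ge ‖y‖ 1 with hy | hy
  · exact hc y hy
  · exact continuousAt_const.congr (ev_zero h0 (lt_of_lt_of_le hr01 hy)).symm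

lemma glue_smooth {r0 : ℝ} (hr01 : r0 < 1) (h : E2 → ℝ)
    (hsm : ∀ y : E2, ‖y‖ < 1 → ContDiffAt ℝ (⊤ : ℕ∞) h y)
    (h0 : ∀ z : E2, r0 ≤ ‖z‖ → h z = 0) :
    Differentiable ℝ h ∧ ∀ v, Continuous (fun y => fderiv ℝ h y v) := by
  have hdiff : Differentiable ℝ h := by
    intro y
    rcases lt_or_ge ‖y‖ 1 with hy | hy
    · exact (hsm y hy).differentiableAt (by simp)
    · exact (differentiableAt_const (0:ℝ)).congr_of_eventuallyEq
        (ev_zero h0 (lt_of_lt_of_le hr01 hy))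
  refine ⟨hdiff, fun v => ?_⟩
  rw [continuous_iff_continuousAt]
  intro y
  rcases lt_or_ge ‖y‖ 1 with hy | hy
  · have : ContinuousAt (fderiv ℝ h) y :=
      ((hsm y hy).fderiv_right (m := (⊤:ℕ∞)) (by exact_mod_cast le_top)).continuousAt
    exact (ContinuousLinearMap.apply ℝ ℝ v).continuous.continuousAt.comp this
  · have hz : ∀ z : E2, 1 - (1 - r0)/2 ≤ ‖z‖ → fderiv ℝ h z = 0 := by
      intro z hzn
      have : r0 < ‖z‖ := by linarith
      rw [(ev_zero h0 this).fderiv_eq]; simp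
    have hev := ev_zero (f := fun z => fderiv ℝ h z v)
      (fun z hzz => by show (fderiv ℝ h z) v = 0; rw [hz z hzz]; rfl) (y := y) (by linarith)
    exact continuousAt_const.congr hev.symm

lemma hasCompactSupport_of_zero_outside {r0 : ℝ} {α : Type*} [Zero α] (f : E2 → α)
    (h0 : ∀ z : E2, r0 ≤ ‖z‖ → f z = 0) : HasCompactSupport f := by
  apply HasCompactSupport.of_support_subset_isCompact (isCompact_closedBall (0:E2) (max r0 0))
  intro y hy
  simp only [Function.mem_support] at hy
  by_contra hmem
  simp only [Metric.mem_closedBall, dist_eq_norm, sub_zero, not_le] at hmem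
  exact hy (h0 y ((le_max_left _ _).trans hmem.le))

lemma integrable_of_zero_outside {r0 : ℝ} (f : E2 → ℝ) (hc : Continuous f)
    (h0 : ∀ z : E2, r0 ≤ ‖z‖ → f z = 0) : Integrable f :=
  hc.integrable_of_hasCompactSupport (hasCompactSupport_of_zero_outside f h0)

lemma integrable_fderiv_dir {r0 : ℝ} (h : E2 → ℝ)
    (hc' : ∀ v, Continuous (fun y => fderiv ℝ h y v))
    (h0 : ∀ y : E2, r0 ≤ ‖y‖ → h y = 0) (v : E2) :
    Integrable (fun y => fderiv ℝ h y v) := by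
  have h0' : ∀ y : E2, r0 < ‖y‖ → fderiv ℝ h y = 0 := by
    intro y hy
    rw [(ev_zero h0 hy).fderiv_eq]; simp
  apply integrable_of_zero_outside (r0 := r0 + 1) _ (hc' v)
  intro z hz
  show (fderiv ℝ h z) v = 0
  rw [h0' z (by linarith)]; rfl

/-- If `h` is differentiable, vanishes outside a closed ball, and its directional derivative
is continuous, then the integral of the directional derivative is zero. -/
lemma integral_fderiv_eq_zero {r0 : ℝ} (h : E2 → ℝ) (hd : Differentiable ℝ h)
    (hc' : ∀ v, Continuous (fun y => fderiv ℝ h y v))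
    (h0 : ∀ y : E2, r0 ≤ ‖y‖ → h y = 0) (v : E2) :
    ∫ y : E2, fderiv ℝ h y v = 0 := by
  have h0' : ∀ y : E2, r0 < ‖y‖ → fderiv ℝ h y = 0 := by
    intro y hy
    rw [(ev_zero h0 hy).fderiv_eq]; simp
  have hint : Integrable h := integrable_of_zero_outside h hd.continuous h0
  have hint' : Integrable (fun y => fderiv ℝ h y v) := by
    apply integrable_of_zero_outside (r0 := r0 + 1) _ (hc' v)
    intro z hz
    show (fderiv ℝ h z) v = 0
    rw [h0' z (by linarith)]; rfl
  have := integral_mul_fderiv_eq_neg_fderiv_mul_of_integrable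
    (f := fun _ : E2 => (1:ℝ)) (g := h) (v := v) (μ := volume)
    ?_ ?_ ?_ (fun x _ => differentiable_const 1 x) (fun x _ => hd x)
  · simpa using this
  · simpa using (integrable_zero E2 ℝ volume)
  · simpa using hint'
  · simpa using hint

/-- generic boundedness from compactness + vanishing -/
lemma bound_of_zero_outside {g : ℝ → E2 → ℝ} {a b r0 : ℝ} (hr0 : r0 < 1)
    (hc : ContinuousOn (fun p : ℝ × E2 => g p.1 p.2)
      (Set.Icc a b ×ˢ Metric.closedBall 0 r0))
    (hz : ∀ x ∈ Set.Icc a b, ∀ y : E2, r0 ≤ ‖y‖ → g x y = 0) :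
    ∃ C : ℝ, 0 ≤ C ∧ ∀ x ∈ Set.Icc a b, ∀ y : E2, |g x y| ≤ C := by
  obtain ⟨C, hC⟩ := (isCompact_Icc.prod (isCompact_closedBall (0:E2) r0)).exists_bound_of_continuousOn hc
  refine ⟨max C 0, le_max_right _ _, fun x hx y => ?_⟩
  rcases le_or_gt ‖y‖ r0 with h | h
  · have := hC (x, y) ⟨hx, by simpa [Metric.mem_closedBall, dist_eq_norm] using h⟩
    rw [Real.norm_eq_abs] at this
    exact this.trans (le_max_left _ _)
  · rw [hz x hx y h.le]; simp


/-! ### Spatial identities at fixed time -/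

noncomputable def H1 (m : ℕ) (ψf : ℝ × E2 → Em m) (i : Fin 2) (s : ℝ) : E2 → ℝ :=
  fun z => ⟪Gfn m ψf i (s, z), ptD ψf (s, z)⟫

noncomputable def H2 (m : ℕ) (ψf : ℝ × E2 → Em m) (i : Fin 2) (s : ℝ) : E2 → ℝ :=
  fun z => (rho z * z i) * ⟪ptD ψf (s, z), ptD ψf (s, z)⟫

section spatial

variable {m : ℕ} {ψf : ℝ × E2 → Em m}

lemma smooth_ptD (hψ : ContDiff ℝ (⊤ : ℕ∞) ψf) : ContDiff ℝ (⊤ : ℕ∞) (fun q => ptD ψf q) :=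
  contDiff_fderiv_apply ψf hψ _

lemma smooth_pxD (hψ : ContDiff ℝ (⊤ : ℕ∞) ψf) (i : Fin 2) :
    ContDiff ℝ (⊤ : ℕ∞) (fun q => pxD i ψf q) :=
  contDiff_fderiv_apply ψf hψ _

lemma smooth_pxD_ptD (hψ : ContDiff ℝ (⊤ : ℕ∞) ψf) (i : Fin 2) :
    ContDiff ℝ (⊤ : ℕ∞) (fun q => pxD i (fun q' => ptD ψf q') q) :=
  contDiff_fderiv_apply _ (smooth_ptD hψ) _

lemma diff_proj2 (l : Fin 2) (p : ℝ × E2) :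
    DifferentiableAt ℝ (fun q : ℝ × E2 => q.2 l) p :=
  (((EuclideanSpace.proj l : E2 →L[ℝ] ℝ).differentiable).comp
    differentiable_snd).differentiableAt

lemma diff_rho_snd {y : E2} (hy : ‖y‖ < 1) (s : ℝ) :
    DifferentiableAt ℝ (fun q : ℝ × E2 => rho q.2) (s, y) :=
  (DifferentiableAt.comp (g := rho) (f := Prod.snd) (s, y) (hasFDerivAt_rho hy).differentiableAt
    differentiableAt_snd :)

lemma Gfn_diff (hψ : ContDiff ℝ (⊤ : ℕ∞) ψf) (i : Fin 2) {y : E2} (hy : ‖y‖ < 1) (s : ℝ) :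
    DifferentiableAt ℝ (Gfn m ψf i) (s, y) := by
  have hrho := diff_rho_snd (s := s) hy
  have hQ : ∀ l : Fin 2, DifferentiableAt ℝ (fun q => pxD l ψf q) (s, y) := fun l =>
    ((smooth_pxD hψ l).differentiable (by simp)).differentiableAt
  exact (hrho.smul (hQ i)).sub
    ((hrho.mul (diff_proj2 i (s, y))).smul
      (DifferentiableAt.fun_sum (fun l _ => (diff_proj2 l (s, y)).smul (hQ l))))

lemma Gfn_slice_contDiffAt (hψ : ContDiff ℝ (⊤ : ℕ∞) ψf) (i : Fin 2) {y : E2}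
    (hy : ‖y‖ < 1) (s : ℝ) :
    ContDiffAt ℝ (⊤ : ℕ∞) (fun z : E2 => Gfn m ψf i (s, z)) y := by
  have hrho : ContDiffAt ℝ (⊤ : ℕ∞) rho y := contDiffAt_rho hy
  have hQ : ∀ l : Fin 2, ContDiffAt ℝ (⊤ : ℕ∞) (fun z : E2 => pxD l ψf (s, z)) y := fun l =>
    (((smooth_pxD hψ l).comp (contDiff_prodMk_right s)).contDiffAt)
  have hproj : ∀ l : Fin 2, ContDiffAt ℝ (⊤ : ℕ∞) (fun z : E2 => z l) y := fun l =>
    ((EuclideanSpace.proj l : E2 →L[ℝ] ℝ).contDiff).contDiffAt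
  exact (hrho.smul (hQ i)).sub
    ((hrho.mul (hproj i)).smul (ContDiffAt.sum (fun l _ => (hproj l).smul (hQ l))))

lemma ptD_slice_contDiff (hψ : ContDiff ℝ (⊤ : ℕ∞) ψf) (s : ℝ) :
    ContDiff ℝ (⊤ : ℕ∞) (fun z : E2 => ptD ψf (s, z)) :=
  (smooth_ptD hψ).comp (contDiff_prodMk_right s)

/-- derivative of the `H1` field in direction `i`. -/
lemma H1_fderiv (hψ : ContDiff ℝ (⊤ : ℕ∞) ψf) (i : Fin 2) {y : E2} (hy : ‖y‖ < 1) (s : ℝ) :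
    fderiv ℝ (H1 m ψf i s) y (EuclideanSpace.single i (1:ℝ))
      = ⟪Gfn m ψf i (s, y), pxD i (fun q => ptD ψf q) (s, y)⟫
        + ⟪pxD i (Gfn m ψf i) (s, y), ptD ψf (s, y)⟫ := by
  have hGd : DifferentiableAt ℝ (fun z : E2 => Gfn m ψf i (s, z)) y :=
    ((Gfn_slice_contDiffAt hψ i hy s).differentiableAt (by simp))
  have hPd : DifferentiableAt ℝ (fun z : E2 => ptD ψf (s, z)) y :=
    ((ptD_slice_contDiff hψ s).differentiable (by simp)).differentiableAt
  have h := fderiv_inner_apply ℝ hGd hPd (EuclideanSpace.single i (1:ℝ))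
  show fderiv ℝ (fun z => ⟪Gfn m ψf i (s, z), ptD ψf (s, z)⟫) y (EuclideanSpace.single i (1:ℝ)) = _
  rw [h]
  rw [fderiv_slice _ _ _ (Gfn_diff hψ i hy s),
    fderiv_slice _ _ _ (((smooth_ptD hψ).differentiable (by simp)).differentiableAt)]
  congr 1

/-- derivative of the `H2` function in direction `i`. -/
lemma H2_fderiv (hψ : ContDiff ℝ (⊤ : ℕ∞) ψf) (i : Fin 2) {y : E2} (hy : ‖y‖ < 1) (s : ℝ) :
    fderiv ℝ (H2 m ψf i s) y (EuclideanSpace.single i (1:ℝ))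
      = (rho y + kap y * (y i * y i)) * ⟪ptD ψf (s, y), ptD ψf (s, y)⟫
        + (rho y * y i) * (⟪ptD ψf (s, y), pxD i (fun q => ptD ψf q) (s, y)⟫
            + ⟪pxD i (fun q => ptD ψf q) (s, y), ptD ψf (s, y)⟫) := by
  have hrd : DifferentiableAt ℝ rho y := (hasFDerivAt_rho hy).differentiableAt
  have hpd : DifferentiableAt ℝ (fun z : E2 => z i) y :=
    (EuclideanSpace.proj i : E2 →L[ℝ] ℝ).differentiableAt
  have hPd : DifferentiableAt ℝ (fun z : E2 => ptD ψf (s, z)) y :=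
    ((ptD_slice_contDiff hψ s).differentiable (by simp)).differentiableAt
  have hPP : DifferentiableAt ℝ (fun z : E2 => ⟪ptD ψf (s, z), ptD ψf (s, z)⟫) y :=
    hPd.inner ℝ hPd
  have hproj_fd : fderiv ℝ (fun z : E2 => z i) y = (EuclideanSpace.proj i : E2 →L[ℝ] ℝ) :=
    (EuclideanSpace.proj i : E2 →L[ℝ] ℝ).hasFDerivAt.fderiv
  have hPP_fd : fderiv ℝ (fun z : E2 => ⟪ptD ψf (s, z), ptD ψf (s, z)⟫) y
        (EuclideanSpace.single i (1:ℝ))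
      = ⟪ptD ψf (s, y), pxD i (fun q => ptD ψf q) (s, y)⟫
        + ⟪pxD i (fun q => ptD ψf q) (s, y), ptD ψf (s, y)⟫ := by
    rw [fderiv_inner_apply ℝ hPd hPd, fderiv_slice _ _ _
      (((smooth_ptD hψ).differentiable (by simp)).differentiableAt)]
    rfl
  show fderiv ℝ (fun z : E2 => (rho z * z i) * ⟪ptD ψf (s, z), ptD ψf (s, z)⟫) y
      (EuclideanSpace.single i (1:ℝ)) = _
  rw [fderiv_fun_mul (hrd.fun_mul hpd) hPP]
  rw [ContinuousLinearMap.add_apply, ContinuousLinearMap.smul_apply,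
    ContinuousLinearMap.smul_apply]
  rw [fderiv_fun_mul hrd hpd, ContinuousLinearMap.add_apply, ContinuousLinearMap.smul_apply,
    ContinuousLinearMap.smul_apply, hproj_fd, (hasFDerivAt_rho hy).fderiv, hPP_fd]
  have h1 : (EuclideanSpace.proj i : E2 →L[ℝ] ℝ) (EuclideanSpace.single i (1:ℝ)) = 1 := by
    fin_cases i <;> simp [EuclideanSpace.single_apply]
  have h2 : (kap y • (innerSL ℝ y)) (EuclideanSpace.single i (1:ℝ)) = kap y * y i := by
    fin_cases i <;> simp [EuclideanSpace.inner_single_right]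
  rw [h1, h2]
  simp only [smul_eq_mul]
  ring

/-- On the sphere, `ψ ⟂ ∂ₛψ`. -/
lemma inner_psi_ptD (hψ : ContDiff ℝ (⊤ : ℕ∞) ψf) {s₁ s₂ : ℝ}
    (hsph : ∀ s ∈ Set.Icc s₁ s₂, ∀ y : E2, ‖y‖ ≤ 1 → ‖ψf (s, y)‖ = 1)
    {s : ℝ} {y : E2} (hs : s ∈ Set.Ioo s₁ s₂) (hy : ‖y‖ < 1) :
    ⟪ψf (s, y), ptD ψf (s, y)⟫ = 0 := by
  have hopen : IsOpen ((Set.Ioo s₁ s₂) ×ˢ {z : E2 | ‖z‖ < 1}) :=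
    isOpen_Ioo.prod (isOpen_lt continuous_norm continuous_const)
  have hev : (fun q : ℝ × E2 => ⟪ψf q, ψf q⟫) =ᶠ[nhds (s, y)] (fun _ => (1:ℝ)) := by
    filter_upwards [hopen.mem_nhds ⟨hs, hy⟩] with q hq
    have h := hsph q.1 ⟨hq.1.1.le, hq.1.2.le⟩ q.2 hq.2.le
    show ⟪ψf q, ψf q⟫ = 1
    rw [real_inner_self_eq_norm_sq]
    rw [show ψf q = ψf (q.1, q.2) from rfl, h]
    norm_num
  have h0 : fderiv ℝ (fun q : ℝ × E2 => ⟪ψf q, ψf q⟫) (s, y) = 0 := by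
    rw [hev.fderiv_eq]
    exact fderiv_const_apply 1
  have hψd : DifferentiableAt ℝ ψf (s, y) :=
    (hψ.differentiable (by simp)).differentiableAt
  have h := fderiv_inner_apply ℝ hψd hψd ((1:ℝ), (0:E2))
  rw [h0] at h
  simp only [ContinuousLinearMap.zero_apply] at h
  have hc : ⟪(fderiv ℝ ψf (s, y)) (1, 0), ψf (s, y)⟫
      = ⟪ψf (s, y), (fderiv ℝ ψf (s, y)) (1, 0)⟫ := real_inner_comm _ _
  show ⟪ψf (s, y), (fderiv ℝ ψf (s, y)) (1, 0)⟫ = 0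
  linarith

section vanish

variable {s₁ s₂ δ : ℝ}

lemma Fd_zero (hsupp : ∀ s ∈ Set.Icc s₁ s₂, ∀ y : E2, 1 - δ ≤ ‖y‖ →
      ptD ψf (s, y) = 0 ∧ ∀ i : Fin 2, pxD i ψf (s, y) = 0)
    {s : ℝ} (hs : s ∈ Set.Icc s₁ s₂) {y : E2} (hy : 1 - δ ≤ ‖y‖) : Fd m ψf s y = 0 := by
  obtain ⟨hP0, hQ0⟩ := hsupp s hs y hy
  simp [Fd, hP0, hQ0]

lemma Ld_zero (hsupp : ∀ s ∈ Set.Icc s₁ s₂, ∀ y : E2, 1 - δ ≤ ‖y‖ →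
      ptD ψf (s, y) = 0 ∧ ∀ i : Fin 2, pxD i ψf (s, y) = 0)
    {s : ℝ} (hs : s ∈ Set.Icc s₁ s₂) {y : E2} (hy : 1 - δ ≤ ‖y‖) : Ld m ψf s y = 0 := by
  obtain ⟨hP0, hQ0⟩ := hsupp s hs y hy
  simp [Ld, hP0, hQ0]

lemma H1_zero (hsupp : ∀ s ∈ Set.Icc s₁ s₂, ∀ y : E2, 1 - δ ≤ ‖y‖ →
      ptD ψf (s, y) = 0 ∧ ∀ i : Fin 2, pxD i ψf (s, y) = 0)
    {s : ℝ} (hs : s ∈ Set.Icc s₁ s₂) (i : Fin 2) {z : E2} (hz : 1 - δ ≤ ‖z‖) :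
    H1 m ψf i s z = 0 := by
  obtain ⟨hP0, hQ0⟩ := hsupp s hs z hz
  simp [H1, hP0]

lemma H2_zero (hsupp : ∀ s ∈ Set.Icc s₁ s₂, ∀ y : E2, 1 - δ ≤ ‖y‖ →
      ptD ψf (s, y) = 0 ∧ ∀ i : Fin 2, pxD i ψf (s, y) = 0)
    {s : ℝ} (hs : s ∈ Set.Icc s₁ s₂) (i : Fin 2) {z : E2} (hz : 1 - δ ≤ ‖z‖) :
    H2 m ψf i s z = 0 := by
  obtain ⟨hP0, hQ0⟩ := hsupp s hs z hz
  simp [H2, hP0]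

/-- The key pointwise divergence identity. -/
lemma pointwise_identity (hψ : ContDiff ℝ (⊤ : ℕ∞) ψf) (hδ : 0 < δ)
    (hsph : ∀ s ∈ Set.Icc s₁ s₂, ∀ y : E2, ‖y‖ ≤ 1 → ‖ψf (s, y)‖ = 1)
    (hsupp : ∀ s ∈ Set.Icc s₁ s₂, ∀ y : E2, 1 - δ ≤ ‖y‖ →
      ptD ψf (s, y) = 0 ∧ ∀ i : Fin 2, pxD i ψf (s, y) = 0)
    (hEq : ∀ s ∈ Set.Icc s₁ s₂, ∀ y : E2, ‖y‖ < 1 →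
      ptD (fun q => ptD ψf q) (s, y)
        = (rho y)⁻¹ •
            (∑ i : Fin 2, pxD i (fun q : ℝ × E2 =>
                rho q.2 • pxD i ψf q
                  - (rho q.2 * q.2 i) • ∑ l : Fin 2, q.2 l • pxD l ψf q) (s, y))
          - (2:ℝ) • (∑ i : Fin 2, y i • pxD i (fun q => ptD ψf q) (s, y))
          - ptD ψf (s, y)
          + (‖ptD ψf (s, y) + ∑ i : Fin 2, y i • pxD i ψf (s, y)‖^2
              - ∑ i : Fin 2, ‖pxD i ψf (s, y)‖^2) • ψf (s, y))
    {s : ℝ} (hs : s ∈ Set.Ioo s₁ s₂) (y : E2) :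
    Fd m ψf s y
      = (∑ i : Fin 2, fderiv ℝ (H1 m ψf i s) y (EuclideanSpace.single i (1:ℝ)))
        - (∑ i : Fin 2, fderiv ℝ (H2 m ψf i s) y (EuclideanSpace.single i (1:ℝ)))
        + ⟪ptD ψf (s, y), ptD ψf (s, y)⟫ * kap y := by
  have hsIcc : s ∈ Set.Icc s₁ s₂ := ⟨hs.1.le, hs.2.le⟩
  rcases lt_or_ge ‖y‖ 1 with hy | hy
  · -- interior case
    have hρ := rho_pos hy
    -- expansions of the divergence terms
    have hs1 : ∑ i : Fin 2, fderiv ℝ (H1 m ψf i s) y (EuclideanSpace.single i (1:ℝ))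
        = ∑ i : Fin 2, (⟪Gfn m ψf i (s, y), pxD i (fun q => ptD ψf q) (s, y)⟫
            + ⟪pxD i (Gfn m ψf i) (s, y), ptD ψf (s, y)⟫) :=
      Finset.sum_congr rfl (fun i _ => H1_fderiv hψ i hy s)
    have hs2 : ∑ i : Fin 2, fderiv ℝ (H2 m ψf i s) y (EuclideanSpace.single i (1:ℝ))
        = ∑ i : Fin 2, ((rho y + kap y * (y i * y i)) * ⟪ptD ψf (s, y), ptD ψf (s, y)⟫
            + (rho y * y i) * (⟪ptD ψf (s, y), pxD i (fun q => ptD ψf q) (s, y)⟫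
              + ⟪pxD i (fun q => ptD ψf q) (s, y), ptD ψf (s, y)⟫)) :=
      Finset.sum_congr rfl (fun i _ => H2_fderiv hψ i hy s)
    -- per-i expansion of the G-term
    have hGP : ∀ i : Fin 2, ⟪Gfn m ψf i (s, y), pxD i (fun q => ptD ψf q) (s, y)⟫
        = rho y * ⟪pxD i (fun q => ptD ψf q) (s, y), pxD i ψf (s, y)⟫
          - rho y * (y i * ⟪∑ l : Fin 2, y l • pxD l ψf (s, y),
              pxD i (fun q => ptD ψf q) (s, y)⟫) := by
      intro i
      have hG : Gfn m ψf i (s, y) = rho y • pxD i ψf (s, y)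
          - (rho y * y i) • (∑ l : Fin 2, y l • pxD l ψf (s, y)) := rfl
      rw [hG, inner_sub_left, real_inner_smul_left, real_inner_smul_left,
        real_inner_comm (pxD i ψf (s, y))]
      ring
    -- F1
    have hF1 : ∑ i : Fin 2, fderiv ℝ (H1 m ψf i s) y (EuclideanSpace.single i (1:ℝ))
        = rho y * (∑ i : Fin 2, ⟪pxD i (fun q => ptD ψf q) (s, y), pxD i ψf (s, y)⟫)
          - rho y * (∑ i : Fin 2, y i * ⟪∑ l : Fin 2, y l • pxD l ψf (s, y),
              pxD i (fun q => ptD ψf q) (s, y)⟫)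
          + ∑ i : Fin 2, ⟪pxD i (Gfn m ψf i) (s, y), ptD ψf (s, y)⟫ := by
      rw [hs1]
      simp only [hGP]
      rw [Finset.sum_add_distrib, Finset.sum_sub_distrib, ← Finset.mul_sum, ← Finset.mul_sum]
    -- sum of squares
    have hS : ∑ i : Fin 2, y i * y i = ‖y‖^2 := by
      rw [EuclideanSpace.norm_sq_eq]
      simp [Fin.sum_univ_two, sq]
    -- F2
    have hF2 : ∑ i : Fin 2, fderiv ℝ (H2 m ψf i s) y (EuclideanSpace.single i (1:ℝ))
        = (2 * rho y + kap y * ‖y‖^2) * ⟪ptD ψf (s, y), ptD ψf (s, y)⟫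
          + 2 * rho y * (∑ i : Fin 2, y i * ⟪pxD i (fun q => ptD ψf q) (s, y),
              ptD ψf (s, y)⟫) := by
      rw [hs2]
      have hcomm : ∀ i : Fin 2, ⟪ptD ψf (s, y), pxD i (fun q => ptD ψf q) (s, y)⟫
          = ⟪pxD i (fun q => ptD ψf q) (s, y), ptD ψf (s, y)⟫ := fun i => real_inner_comm _ _
      simp only [hcomm]
      rw [Finset.sum_add_distrib]
      congr 1
      · rw [← Finset.sum_mul]
        congr 1
        rw [← hS, Finset.sum_add_distrib, Finset.sum_const, Finset.card_univ, ← Finset.mul_sum]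
        simp [Fintype.card_fin, nsmul_eq_mul]
      · rw [Finset.mul_sum]
        apply Finset.sum_congr rfl
        intro i _
        ring
    -- F3
    have hF3 : ⟪∑ i : Fin 2, y i • pxD i (fun q => ptD ψf q) (s, y),
          ∑ i : Fin 2, y i • pxD i ψf (s, y)⟫
        = ∑ i : Fin 2, y i * ⟪∑ l : Fin 2, y l • pxD l ψf (s, y),
            pxD i (fun q => ptD ψf q) (s, y)⟫ := by
      rw [sum_inner]
      apply Finset.sum_congr rfl
      intro i _
      rw [real_inner_smul_left, real_inner_comm]
    -- the equation, tested against P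
    have hEq' := hEq s hsIcc y hy
    have key3 : ⟪ptD (fun q => ptD ψf q) (s, y), ptD ψf (s, y)⟫ * rho y
        = (∑ i : Fin 2, ⟪pxD i (Gfn m ψf i) (s, y), ptD ψf (s, y)⟫)
          - 2 * (rho y * (∑ i : Fin 2, y i * ⟪pxD i (fun q => ptD ψf q) (s, y),
              ptD ψf (s, y)⟫))
          - rho y * ⟪ptD ψf (s, y), ptD ψf (s, y)⟫ := by
      have hlam : (∑ i : Fin 2, pxD i (fun q : ℝ × E2 =>
              rho q.2 • pxD i ψf q
                - (rho q.2 * q.2 i) • ∑ l : Fin 2, q.2 l • pxD l ψf q) (s, y))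
          = ∑ i : Fin 2, pxD i (Gfn m ψf i) (s, y) := rfl
      rw [hlam] at hEq'
      have hinner := congrArg (fun v : Em m => ⟪v, ptD ψf (s, y)⟫) hEq'
      simp only [inner_add_left, inner_sub_left, real_inner_smul_left, sum_inner] at hinner
      rw [inner_psi_ptD hψ hsph hs hy] at hinner
      have hinv : (rho y)⁻¹ * rho y = 1 := inv_mul_cancel₀ hρ.ne'
      rw [hinner]
      linear_combination (∑ i : Fin 2, ⟪pxD i (Gfn m ψf i) (s, y), ptD ψf (s, y)⟫) * hinv
    rw [hF1, hF2]
    show (⟪ptD (fun q => ptD ψf q) (s, y), ptD ψf (s, y)⟫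
      + ∑ i : Fin 2, ⟪pxD i (fun q => ptD ψf q) (s, y), pxD i ψf (s, y)⟫
      - ⟪∑ i : Fin 2, y i • pxD i (fun q => ptD ψf q) (s, y),
          ∑ i : Fin 2, y i • pxD i ψf (s, y)⟫) * rho y = _
    have hρκ := rho_eq_kap hy
    linear_combination key3 - rho y * hF3 + ⟪ptD ψf (s, y), ptD ψf (s, y)⟫ * hρκ
  · -- exterior case
    have h1δ : (1:ℝ) - δ ≤ ‖y‖ := by linarith
    have hr0y : max (1 - δ) 0 < ‖y‖ := by
      rcases le_or_gt (1 - δ) 0 with h | h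
      · rw [max_eq_right h]; linarith
      · rw [max_eq_left h.le]; linarith
    have hmax : ∀ z : E2, max (1 - δ) 0 ≤ ‖z‖ → (1:ℝ) - δ ≤ ‖z‖ := fun z hz =>
      le_trans (le_max_left _ _) hz
    have hfd1 : ∀ i : Fin 2, fderiv ℝ (H1 m ψf i s) y (EuclideanSpace.single i (1:ℝ)) = 0 := by
      intro i
      have hev := ev_zero (fun z hz => H1_zero hsupp hsIcc i (hmax z hz)) hr0y
      rw [hev.fderiv_eq, fderiv_fun_const]
      rfl
    have hfd2 : ∀ i : Fin 2, fderiv ℝ (H2 m ψf i s) y (EuclideanSpace.single i (1:ℝ)) = 0 := by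
      intro i
      have hev := ev_zero (fun z hz => H2_zero hsupp hsIcc i (hmax z hz)) hr0y
      rw [hev.fderiv_eq, fderiv_fun_const]
      rfl
    have hP0 := (hsupp s hsIcc y h1δ).1
    rw [Fd_zero hsupp hsIcc h1δ]
    simp [hfd1, hfd2, hP0]

lemma contDiffAt_kap {y : E2} (hy : ‖y‖ < 1) : ContDiffAt ℝ (⊤ : ℕ∞) kap y := by
  have hpos : 0 < 1 - ‖y‖^2 := by nlinarith [norm_nonneg y]
  have h1 : ContDiffAt ℝ (⊤ : ℕ∞) (fun t : ℝ => t ^ (-(3/2) : ℝ)) (1 - ‖y‖^2) :=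
    Real.contDiffAt_rpow_const_of_ne hpos.ne'
  have h2 : ContDiff ℝ (⊤ : ℕ∞) (fun z : E2 => 1 - ‖z‖^2) := by
    have hin : ContDiff ℝ (⊤ : ℕ∞) (fun z : E2 => ⟪z, z⟫) := contDiff_id.inner ℝ contDiff_id
    have he : (fun z : E2 => (1:ℝ) - ‖z‖^2) = fun z : E2 => 1 - ⟪z, z⟫ := by
      funext z; rw [real_inner_self_eq_norm_sq]
    rw [he]
    exact contDiff_const.sub hin
  exact h1.comp y h2.contDiffAt

lemma H1_smoothAt (hψ : ContDiff ℝ (⊤ : ℕ∞) ψf) (i : Fin 2) (s : ℝ) {y : E2} (hy : ‖y‖ < 1) :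
    ContDiffAt ℝ (⊤ : ℕ∞) (H1 m ψf i s) y :=
  (Gfn_slice_contDiffAt hψ i hy s).inner ℝ (ptD_slice_contDiff hψ s).contDiffAt

lemma H2_smoothAt (hψ : ContDiff ℝ (⊤ : ℕ∞) ψf) (i : Fin 2) (s : ℝ) {y : E2} (hy : ‖y‖ < 1) :
    ContDiffAt ℝ (⊤ : ℕ∞) (H2 m ψf i s) y := by
  have hP : ContDiffAt ℝ (⊤ : ℕ∞) (fun z : E2 => ptD ψf (s, z)) y :=
    (ptD_slice_contDiff hψ s).contDiffAt
  exact ((contDiffAt_rho hy).mul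
    ((EuclideanSpace.proj i : E2 →L[ℝ] ℝ).contDiff).contDiffAt).mul (hP.inner ℝ hP)

/-- The spatial identity: integrating the time-derivative density gives the flux. -/
lemma flux_eq (hψ : ContDiff ℝ (⊤ : ℕ∞) ψf) (hδ : 0 < δ)
    (hsph : ∀ s ∈ Set.Icc s₁ s₂, ∀ y : E2, ‖y‖ ≤ 1 → ‖ψf (s, y)‖ = 1)
    (hsupp : ∀ s ∈ Set.Icc s₁ s₂, ∀ y : E2, 1 - δ ≤ ‖y‖ →
      ptD ψf (s, y) = 0 ∧ ∀ i : Fin 2, pxD i ψf (s, y) = 0)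
    (hEq : ∀ s ∈ Set.Icc s₁ s₂, ∀ y : E2, ‖y‖ < 1 →
      ptD (fun q => ptD ψf q) (s, y)
        = (rho y)⁻¹ •
            (∑ i : Fin 2, pxD i (fun q : ℝ × E2 =>
                rho q.2 • pxD i ψf q
                  - (rho q.2 * q.2 i) • ∑ l : Fin 2, q.2 l • pxD l ψf q) (s, y))
          - (2:ℝ) • (∑ i : Fin 2, y i • pxD i (fun q => ptD ψf q) (s, y))
          - ptD ψf (s, y)
          + (‖ptD ψf (s, y) + ∑ i : Fin 2, y i • pxD i ψf (s, y)‖^2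
              - ∑ i : Fin 2, ‖pxD i ψf (s, y)‖^2) • ψf (s, y))
    {s : ℝ} (hs : s ∈ Set.Ioo s₁ s₂) :
    ∫ y in Metric.ball (0:E2) 1, Fd m ψf s y = fluxDen m ψf s := by
  have hsIcc : s ∈ Set.Icc s₁ s₂ := ⟨hs.1.le, hs.2.le⟩
  set r0 : ℝ := max (1 - δ) 0 with hr0def
  have hr01 : r0 < 1 := max_lt (by linarith) one_pos
  have hmax : ∀ z : E2, r0 ≤ ‖z‖ → (1:ℝ) - δ ≤ ‖z‖ := fun z hz =>
    le_trans (le_max_left _ _) hz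
  -- glue data for H1 and H2
  have hglue1 : ∀ i : Fin 2, Differentiable ℝ (H1 m ψf i s)
      ∧ ∀ v, Continuous (fun y => fderiv ℝ (H1 m ψf i s) y v) := fun i =>
    glue_smooth hr01 _ (fun y hy => H1_smoothAt hψ i s hy)
      (fun z hz => H1_zero hsupp hsIcc i (hmax z hz))
  have hglue2 : ∀ i : Fin 2, Differentiable ℝ (H2 m ψf i s)
      ∧ ∀ v, Continuous (fun y => fderiv ℝ (H2 m ψf i s) y v) := fun i =>
    glue_smooth hr01 _ (fun y hy => H2_smoothAt hψ i s hy)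
      (fun z hz => H2_zero hsupp hsIcc i (hmax z hz))
  -- integrability of the three pieces
  have hintD1 : Integrable (fun y : E2 =>
      ∑ i : Fin 2, fderiv ℝ (H1 m ψf i s) y (EuclideanSpace.single i (1:ℝ))) := by
    apply integrable_finset_sum
    intro i _
    exact integrable_fderiv_dir (r0 := r0) _ (hglue1 i).2
      (fun z hz => H1_zero hsupp hsIcc i (hmax z hz)) _
  have hintD2 : Integrable (fun y : E2 =>
      ∑ i : Fin 2, fderiv ℝ (H2 m ψf i s) y (EuclideanSpace.single i (1:ℝ))) := by
    apply integrable_finset_sum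
    intro i _
    exact integrable_fderiv_dir (r0 := r0) _ (hglue2 i).2
      (fun z hz => H2_zero hsupp hsIcc i (hmax z hz)) _
  have hPPzero : ∀ z : E2, r0 ≤ ‖z‖ →
      ⟪ptD ψf (s, z), ptD ψf (s, z)⟫ * kap z = 0 := by
    intro z hz
    rw [(hsupp s hsIcc z (hmax z hz)).1]
    simp
  have hintPP : Integrable (fun y : E2 => ⟪ptD ψf (s, y), ptD ψf (s, y)⟫ * kap y) := by
    apply integrable_of_zero_outside (r0 := r0) _ _ hPPzero
    apply glue_cont hr01 _ _ hPPzero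
    intro y hy
    have hP : Continuous (fun z : E2 => ptD ψf (s, z)) :=
      (ptD_slice_contDiff hψ s).continuous
    exact ((hP.inner hP).continuousAt.mul ((contDiffAt_kap hy).continuousAt))
  -- the computation
  have hFdzero : ∀ y : E2, y ∉ Metric.ball (0:E2) 1 → Fd m ψf s y = 0 := by
    intro y hy
    simp only [Metric.mem_ball, dist_eq_norm, sub_zero, not_lt] at hy
    exact Fd_zero hsupp hsIcc (by linarith)
  rw [setIntegral_eq_integral_of_forall_compl_eq_zero hFdzero]
  have hpt := integral_congr_ae (μ := (volume : Measure E2))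
    (ae_of_all _ (pointwise_identity hψ hδ hsph hsupp hEq hs))
  rw [hpt]
  have hint12 : Integrable (fun y : E2 =>
      (∑ i : Fin 2, fderiv ℝ (H1 m ψf i s) y (EuclideanSpace.single i (1:ℝ)))
        - (∑ i : Fin 2, fderiv ℝ (H2 m ψf i s) y (EuclideanSpace.single i (1:ℝ)))) volume :=
    hintD1.sub hintD2
  rw [integral_add hint12 hintPP]
  rw [integral_sub hintD1 hintD2,
    integral_finset_sum _ (fun i _ => integrable_fderiv_dir (r0 := r0) _ (hglue1 i).2
      (fun z hz => H1_zero hsupp hsIcc i (hmax z hz)) _),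
    integral_finset_sum _ (fun i _ => integrable_fderiv_dir (r0 := r0) _ (hglue2 i).2
      (fun z hz => H2_zero hsupp hsIcc i (hmax z hz)) _)]
  have hz1 : ∀ i : Fin 2, ∫ y : E2, fderiv ℝ (H1 m ψf i s) y (EuclideanSpace.single i (1:ℝ)) = 0 :=
    fun i => integral_fderiv_eq_zero (r0 := r0) _ (hglue1 i).1 (hglue1 i).2
      (fun z hz => H1_zero hsupp hsIcc i (hmax z hz)) _
  have hz2 : ∀ i : Fin 2, ∫ y : E2, fderiv ℝ (H2 m ψf i s) y (EuclideanSpace.single i (1:ℝ)) = 0 :=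
    fun i => integral_fderiv_eq_zero (r0 := r0) _ (hglue2 i).1 (hglue2 i).2
      (fun z hz => H2_zero hsupp hsIcc i (hmax z hz)) _
  simp only [hz1, hz2, Finset.sum_const_zero, sub_zero, zero_sub, neg_zero, zero_add]
  have hback : ∫ y : E2, ⟪ptD ψf (s, y), ptD ψf (s, y)⟫ * kap y
      = ∫ y in Metric.ball (0:E2) 1, ⟪ptD ψf (s, y), ptD ψf (s, y)⟫ * kap y := by
    refine (setIntegral_eq_integral_of_forall_compl_eq_zero ?_).symm
    intro y hy
    simp only [Metric.mem_ball, dist_eq_norm, sub_zero, not_lt] at hy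
    have hr0le : r0 ≤ ‖y‖ := by
      rcases le_or_gt (1 - δ) 0 with h | h
      · rw [hr0def, max_eq_right h]; linarith
      · rw [hr0def, max_eq_left h.le]; linarith
    exact hPPzero y hr0le
  rw [hback]
  have : (fun y : E2 => ⟪ptD ψf (s, y), ptD ψf (s, y)⟫ * kap y)
      = fun y : E2 => ‖ptD ψf (s, y)‖^2 * (1 - ‖y‖^2) ^ (-(3/2) : ℝ) := by
    funext y
    rw [real_inner_self_eq_norm_sq]
    rfl
  rw [this]
  rfl

end vanish

/-- pointwise time derivative of the Lyapunov density -/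
lemma Ld_hasDerivAt (hψ : ContDiff ℝ (⊤ : ℕ∞) ψf) (y : E2) (x : ℝ) :
    HasDerivAt (fun t => Ld m ψf t y) (2 * Fd m ψf x y) x := by
  have hdP : DifferentiableAt ℝ (fun q => ptD ψf q) (x, y) :=
    ((smooth_ptD hψ).differentiable (by simp)).differentiableAt
  have hP : HasDerivAt (fun t => ptD ψf (t, y)) (ptD (fun q => ptD ψf q) (x, y)) x :=
    hasDerivAt_sliceT _ x y hdP
  have hQ : ∀ i : Fin 2, HasDerivAt (fun t => pxD i ψf (t, y))
      (pxD i (fun q => ptD ψf q) (x, y)) x := by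
    intro i
    have hdQ : DifferentiableAt ℝ (fun q => pxD i ψf q) (x, y) :=
      ((smooth_pxD hψ i).differentiable (by simp)).differentiableAt
    have h2 : HasDerivAt (fun t => pxD i ψf (t, y)) (ptD (fun q => pxD i ψf q) (x, y)) x :=
      hasDerivAt_sliceT _ x y hdQ
    rw [ptD_pxD_comm ψf hψ i (x, y)] at h2
    exact h2
  have hR : HasDerivAt (fun t => ∑ i : Fin 2, y i • pxD i ψf (t, y))
      (∑ i : Fin 2, y i • pxD i (fun q => ptD ψf q) (x, y)) x :=
    HasDerivAt.fun_sum (fun i _ => (hQ i).const_smul (y i))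
  have hiP := hP.inner ℝ hP
  have hiQ := fun i : Fin 2 => (hQ i).inner ℝ (hQ i)
  have hiR := hR.inner ℝ hR
  have h := ((hiP.fun_add (HasDerivAt.fun_sum (fun i (_ : i ∈ Finset.univ) => hiQ i))).fun_sub hiR).mul_const
    (rho y)
  have hfun : (fun t => (⟪ptD ψf (t, y), ptD ψf (t, y)⟫
      + ∑ i : Fin 2, ⟪pxD i ψf (t, y), pxD i ψf (t, y)⟫
      - ⟪∑ i : Fin 2, y i • pxD i ψf (t, y), ∑ i : Fin 2, y i • pxD i ψf (t, y)⟫) * rho y)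
      = fun t => Ld m ψf t y := rfl
  rw [hfun] at h
  refine HasDerivAt.congr_deriv h (Eq.symm ?_)
  show 2 * Fd m ψf x y = _
  rw [Fd]
  rw [real_inner_comm (ptD ψf (x, y)) (ptD (fun q => ptD ψf q) (x, y))]
  rw [real_inner_comm (∑ i : Fin 2, y i • pxD i ψf (x, y))
    (∑ i : Fin 2, y i • pxD i (fun q => ptD ψf q) (x, y))]
  have hQc : ∀ i : Fin 2, ⟪pxD i ψf (x, y), pxD i (fun q => ptD ψf q) (x, y)⟫
      = ⟪pxD i (fun q => ptD ψf q) (x, y), pxD i ψf (x, y)⟫ := fun i => real_inner_comm _ _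
  simp only [hQc]
  have hsum2 : ∑ i : Fin 2, (⟪pxD i (fun q => ptD ψf q) (x, y), pxD i ψf (x, y)⟫
      + ⟪pxD i (fun q => ptD ψf q) (x, y), pxD i ψf (x, y)⟫)
      = 2 * ∑ i : Fin 2, ⟪pxD i (fun q => ptD ψf q) (x, y), pxD i ψf (x, y)⟫ := by
    rw [Finset.mul_sum]
    exact Finset.sum_congr rfl (fun i _ => (two_mul _).symm)
  rw [hsum2]
  ring

/-- Continuity of the auxiliary densities on the relevant compact sets. -/
lemma Ld_contOn (hψ : ContDiff ℝ (⊤ : ℕ∞) ψf) {a b r0 : ℝ} (hr01 : r0 < 1) :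
    ContinuousOn (fun p : ℝ × E2 => Ld m ψf p.1 p.2)
      (Set.Icc a b ×ˢ Metric.closedBall 0 r0) := by
  have hrho : ContinuousOn (fun p : ℝ × E2 => rho p.2)
      (Set.Icc a b ×ˢ Metric.closedBall 0 r0) := by
    intro p hp
    have hy : ‖p.2‖ < 1 := by
      have := hp.2
      simp only [Metric.mem_closedBall, dist_eq_norm, sub_zero] at this
      linarith
    exact ((contDiffAt_rho hy).continuousAt.comp continuousAt_snd).continuousWithinAt
  have hP : Continuous (fun p : ℝ × E2 => ptD ψf p) := (smooth_ptD hψ).continuous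
  have hQ : ∀ i : Fin 2, Continuous (fun p : ℝ × E2 => pxD i ψf p) := fun i =>
    (smooth_pxD hψ i).continuous
  have hRc : Continuous (fun p : ℝ × E2 => ∑ i : Fin 2, p.2 i • pxD i ψf p) := by
    apply continuous_finset_sum
    intro i _
    exact ((EuclideanSpace.proj i : E2 →L[ℝ] ℝ).continuous.comp continuous_snd).smul (hQ i)
  have hN : Continuous (fun p : ℝ × E2 => ⟪ptD ψf p, ptD ψf p⟫
      + ∑ i : Fin 2, ⟪pxD i ψf p, pxD i ψf p⟫
      - ⟪∑ i : Fin 2, p.2 i • pxD i ψf p, ∑ i : Fin 2, p.2 i • pxD i ψf p⟫) := by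
    exact ((hP.inner hP).add (continuous_finset_sum _
      (fun i _ => (hQ i).inner (hQ i)))).sub (hRc.inner hRc)
  exact hN.continuousOn.mul hrho

lemma Fd_contOn (hψ : ContDiff ℝ (⊤ : ℕ∞) ψf) {a b r0 : ℝ} (hr01 : r0 < 1) :
    ContinuousOn (fun p : ℝ × E2 => Fd m ψf p.1 p.2)
      (Set.Icc a b ×ˢ Metric.closedBall 0 r0) := by
  have hrho : ContinuousOn (fun p : ℝ × E2 => rho p.2)
      (Set.Icc a b ×ˢ Metric.closedBall 0 r0) := by
    intro p hp
    have hy : ‖p.2‖ < 1 := by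
      have := hp.2
      simp only [Metric.mem_closedBall, dist_eq_norm, sub_zero] at this
      linarith
    exact ((contDiffAt_rho hy).continuousAt.comp continuousAt_snd).continuousWithinAt
  have hP : Continuous (fun p : ℝ × E2 => ptD ψf p) := (smooth_ptD hψ).continuous
  have hA : Continuous (fun p : ℝ × E2 => ptD (fun q => ptD ψf q) p) :=
    (smooth_ptD (smooth_ptD hψ)).continuous
  have hQ : ∀ i : Fin 2, Continuous (fun p : ℝ × E2 => pxD i ψf p) := fun i =>
    (smooth_pxD hψ i).continuous
  have hB : ∀ i : Fin 2, Continuous (fun p : ℝ × E2 => pxD i (fun q => ptD ψf q) p) := fun i =>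
    (smooth_pxD (smooth_ptD hψ) i).continuous
  have hRc : Continuous (fun p : ℝ × E2 => ∑ i : Fin 2, p.2 i • pxD i ψf p) :=
    continuous_finset_sum _ (fun i _ =>
      ((EuclideanSpace.proj i : E2 →L[ℝ] ℝ).continuous.comp continuous_snd).smul (hQ i))
  have hYc : Continuous (fun p : ℝ × E2 => ∑ i : Fin 2, p.2 i • pxD i (fun q => ptD ψf q) p) :=
    continuous_finset_sum _ (fun i _ =>
      ((EuclideanSpace.proj i : E2 →L[ℝ] ℝ).continuous.comp continuous_snd).smul (hB i))
  have hN : Continuous (fun p : ℝ × E2 => ⟪ptD (fun q => ptD ψf q) p, ptD ψf p⟫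
      + ∑ i : Fin 2, ⟪pxD i (fun q => ptD ψf q) p, pxD i ψf p⟫
      - ⟪∑ i : Fin 2, p.2 i • pxD i (fun q => ptD ψf q) p,
          ∑ i : Fin 2, p.2 i • pxD i ψf p⟫) :=
    ((hA.inner hP).add (continuous_finset_sum _
      (fun i _ => (hB i).inner (hQ i)))).sub (hYc.inner hRc)
  exact hN.continuousOn.mul hrho

lemma Ld_cont_time (hψ : ContDiff ℝ (⊤ : ℕ∞) ψf) (y : E2) :
    Continuous (fun x : ℝ => Ld m ψf x y) := by
  have hP : Continuous (fun x : ℝ => ptD ψf (x, y)) :=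
    (smooth_ptD hψ).continuous.comp (continuous_id.prodMk continuous_const)
  have hQ : ∀ i : Fin 2, Continuous (fun x : ℝ => pxD i ψf (x, y)) := fun i =>
    (smooth_pxD hψ i).continuous.comp (continuous_id.prodMk continuous_const)
  have hR : Continuous (fun x : ℝ => ∑ i : Fin 2, y i • pxD i ψf (x, y)) :=
    continuous_finset_sum _ (fun i _ => (hQ i).const_smul (y i))
  exact (((hP.inner hP).add (continuous_finset_sum _ (fun i _ => (hQ i).inner (hQ i)))).sub
    (hR.inner hR)).mul continuous_const

lemma Ld_contOn_ball (hψ : ContDiff ℝ (⊤ : ℕ∞) ψf) (x : ℝ) :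
    ContinuousOn (fun y : E2 => Ld m ψf x y) (Metric.ball (0:E2) 1) := by
  have hP : Continuous (fun y : E2 => ptD ψf (x, y)) :=
    (smooth_ptD hψ).continuous.comp (continuous_const.prodMk continuous_id)
  have hQ : ∀ i : Fin 2, Continuous (fun y : E2 => pxD i ψf (x, y)) := fun i =>
    (smooth_pxD hψ i).continuous.comp (continuous_const.prodMk continuous_id)
  have hR : Continuous (fun y : E2 => ∑ i : Fin 2, y i • pxD i ψf (x, y)) :=
    continuous_finset_sum _ (fun i _ =>
      ((EuclideanSpace.proj i : E2 →L[ℝ] ℝ).continuous).smul (hQ i))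
  have hN : Continuous (fun y : E2 => ⟪ptD ψf (x, y), ptD ψf (x, y)⟫
      + ∑ i : Fin 2, ⟪pxD i ψf (x, y), pxD i ψf (x, y)⟫
      - ⟪∑ i : Fin 2, y i • pxD i ψf (x, y), ∑ i : Fin 2, y i • pxD i ψf (x, y)⟫) :=
    ((hP.inner hP).add (continuous_finset_sum _ (fun i _ => (hQ i).inner (hQ i)))).sub
      (hR.inner hR)
  apply hN.continuousOn.mul
  intro y hy
  simp only [Metric.mem_ball, dist_eq_norm, sub_zero] at hy
  exact (contDiffAt_rho hy).continuousAt.continuousWithinAt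

lemma Fd_contOn_ball (hψ : ContDiff ℝ (⊤ : ℕ∞) ψf) (x : ℝ) :
    ContinuousOn (fun y : E2 => Fd m ψf x y) (Metric.ball (0:E2) 1) := by
  have hP : Continuous (fun y : E2 => ptD ψf (x, y)) :=
    (smooth_ptD hψ).continuous.comp (continuous_const.prodMk continuous_id)
  have hA : Continuous (fun y : E2 => ptD (fun q => ptD ψf q) (x, y)) :=
    (smooth_ptD (smooth_ptD hψ)).continuous.comp (continuous_const.prodMk continuous_id)
  have hQ : ∀ i : Fin 2, Continuous (fun y : E2 => pxD i ψf (x, y)) := fun i =>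
    (smooth_pxD hψ i).continuous.comp (continuous_const.prodMk continuous_id)
  have hB : ∀ i : Fin 2, Continuous (fun y : E2 => pxD i (fun q => ptD ψf q) (x, y)) := fun i =>
    (smooth_pxD (smooth_ptD hψ) i).continuous.comp (continuous_const.prodMk continuous_id)
  have hR : Continuous (fun y : E2 => ∑ i : Fin 2, y i • pxD i ψf (x, y)) :=
    continuous_finset_sum _ (fun i _ =>
      ((EuclideanSpace.proj i : E2 →L[ℝ] ℝ).continuous).smul (hQ i))
  have hY : Continuous (fun y : E2 => ∑ i : Fin 2, y i • pxD i (fun q => ptD ψf q) (x, y)) :=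
    continuous_finset_sum _ (fun i _ =>
      ((EuclideanSpace.proj i : E2 →L[ℝ] ℝ).continuous).smul (hB i))
  have hN : Continuous (fun y : E2 => ⟪ptD (fun q => ptD ψf q) (x, y), ptD ψf (x, y)⟫
      + ∑ i : Fin 2, ⟪pxD i (fun q => ptD ψf q) (x, y), pxD i ψf (x, y)⟫
      - ⟪∑ i : Fin 2, y i • pxD i (fun q => ptD ψf q) (x, y),
          ∑ i : Fin 2, y i • pxD i ψf (x, y)⟫) :=
    ((hA.inner hP).add (continuous_finset_sum _ (fun i _ => (hB i).inner (hQ i)))).sub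
      (hY.inner hR)
  apply hN.continuousOn.mul
  intro y hy
  simp only [Metric.mem_ball, dist_eq_norm, sub_zero] at hy
  exact (contDiffAt_rho hy).continuousAt.continuousWithinAt

lemma lyap_eq_Ld (m : ℕ) (ψf : ℝ × E2 → Em m) (x : ℝ) :
    lyap m ψf x = (1/2 : ℝ) * ∫ y in Metric.ball (0:E2) 1, Ld m ψf x y := by
  unfold lyap
  congr 1
  apply integral_congr_ae
  apply ae_of_all
  intro y
  show (‖ptD ψf (x, y)‖^2 + ∑ i : Fin 2, ‖pxD i ψf (x, y)‖^2
      - ‖∑ i : Fin 2, y i • pxD i ψf (x, y)‖^2) * rho y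
    = (⟪ptD ψf (x, y), ptD ψf (x, y)⟫ + ∑ i : Fin 2, ⟪pxD i ψf (x, y), pxD i ψf (x, y)⟫
      - ⟪∑ i : Fin 2, y i • pxD i ψf (x, y), ∑ i : Fin 2, y i • pxD i ψf (x, y)⟫) * rho y
  simp only [real_inner_self_eq_norm_sq]

section derivative

variable {m : ℕ} {ψf : ℝ × E2 → Em m} {s₁ s₂ δ : ℝ}

lemma lyap_hasDerivAt (hψ : ContDiff ℝ (⊤ : ℕ∞) ψf) (hδ : 0 < δ)
    (hsph : ∀ s ∈ Set.Icc s₁ s₂, ∀ y : E2, ‖y‖ ≤ 1 → ‖ψf (s, y)‖ = 1)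
    (hsupp : ∀ s ∈ Set.Icc s₁ s₂, ∀ y : E2, 1 - δ ≤ ‖y‖ →
      ptD ψf (s, y) = 0 ∧ ∀ i : Fin 2, pxD i ψf (s, y) = 0)
    (hEq : ∀ s ∈ Set.Icc s₁ s₂, ∀ y : E2, ‖y‖ < 1 →
      ptD (fun q => ptD ψf q) (s, y)
        = (rho y)⁻¹ •
            (∑ i : Fin 2, pxD i (fun q : ℝ × E2 =>
                rho q.2 • pxD i ψf q
                  - (rho q.2 * q.2 i) • ∑ l : Fin 2, q.2 l • pxD l ψf q) (s, y))
          - (2:ℝ) • (∑ i : Fin 2, y i • pxD i (fun q => ptD ψf q) (s, y))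
          - ptD ψf (s, y)
          + (‖ptD ψf (s, y) + ∑ i : Fin 2, y i • pxD i ψf (s, y)‖^2
              - ∑ i : Fin 2, ‖pxD i ψf (s, y)‖^2) • ψf (s, y))
    {s₀ : ℝ} (hs₀ : s₀ ∈ Set.Ioo s₁ s₂) :
    HasDerivAt (lyap m ψf) (fluxDen m ψf s₀) s₀ := by
  have hs₀Icc : s₀ ∈ Set.Icc s₁ s₂ := ⟨hs₀.1.le, hs₀.2.le⟩
  set μ := (volume : Measure E2).restrict (Metric.ball (0:E2) 1) with hμdef
  haveI : IsFiniteMeasure μ := by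
    constructor
    rw [hμdef, Measure.restrict_apply_univ]
    exact measure_ball_lt_top
  set r0 : ℝ := max (1 - δ) 0 with hr0def
  have hr01 : r0 < 1 := max_lt (by linarith) one_pos
  have hmax : ∀ z : E2, r0 ≤ ‖z‖ → (1:ℝ) - δ ≤ ‖z‖ := fun z hz =>
    le_trans (le_max_left _ _) hz
  obtain ⟨C, hC0, hC⟩ := bound_of_zero_outside (g := fun x y => Fd m ψf x y)
    (a := s₁) (b := s₂) hr01 (Fd_contOn hψ hr01)
    (fun x hx y hy => Fd_zero hsupp hx (hmax y hy))
  obtain ⟨CL, hCL0, hCL⟩ := bound_of_zero_outside (g := fun x y => Ld m ψf x y)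
    (a := s₁) (b := s₂) hr01 (Ld_contOn hψ hr01)
    (fun x hx y hy => Ld_zero hsupp hx (hmax y hy))
  set ε : ℝ := min (s₀ - s₁) (s₂ - s₀) with hεdef
  have hε : 0 < ε := lt_min (by linarith [hs₀.1]) (by linarith [hs₀.2])
  have hball : Metric.ball s₀ ε ⊆ Set.Icc s₁ s₂ := by
    intro x hx
    rw [Metric.mem_ball, Real.dist_eq, abs_lt] at hx
    have h1 : ε ≤ s₀ - s₁ := min_le_left _ _
    have h2 : ε ≤ s₂ - s₀ := min_le_right _ _
    constructor <;> linarith [hx.1, hx.2]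
  have hmeasL : ∀ x : ℝ, AEStronglyMeasurable (fun y => Ld m ψf x y) μ := fun x =>
    (Ld_contOn_ball hψ x).aestronglyMeasurable measurableSet_ball
  have hmeasF : AEStronglyMeasurable (fun y => 2 * Fd m ψf s₀ y) μ :=
    ((Fd_contOn_ball hψ s₀).aestronglyMeasurable measurableSet_ball).const_mul 2
  have hint : Integrable (fun y => Ld m ψf s₀ y) μ := by
    apply (integrable_const CL).mono' (hmeasL s₀)
    apply ae_of_all
    intro y
    rw [Real.norm_eq_abs]
    exact hCL s₀ hs₀Icc y
  have hdom := hasDerivAt_integral_of_dominated_loc_of_deriv_le (μ := μ)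
    (F := fun x y => Ld m ψf x y) (F' := fun x y => 2 * Fd m ψf x y)
    (x₀ := s₀) (bound := fun _ => 2 * C) (s := Metric.ball s₀ ε) (Metric.ball_mem_nhds s₀ hε)
    (Filter.Eventually.of_forall hmeasL) hint hmeasF
    (ae_of_all _ (fun y x hx => by
      rw [Real.norm_eq_abs, abs_mul, abs_two]
      have h := hC x (hball hx) y
      show 2 * |Fd m ψf x y| ≤ 2 * C
      linarith))
    (integrable_const (2 * C))
    (ae_of_all _ (fun y x _ => Ld_hasDerivAt hψ y x))
  obtain ⟨-, hder⟩ := hdom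
  have h2 : ∫ y, 2 * Fd m ψf s₀ y ∂μ = 2 * fluxDen m ψf s₀ := by
    rw [MeasureTheory.integral_const_mul]
    rw [hμdef]
    rw [flux_eq hψ hδ hsph hsupp hEq hs₀]
  have hhalf := hder.const_mul (1/2 : ℝ)
  have hfun : (fun x => (1/2 : ℝ) * ∫ y, Ld m ψf x y ∂μ) = lyap m ψf := by
    funext x
    rw [hμdef]
    exact (lyap_eq_Ld m ψf x).symm
  rw [hfun, h2] at hhalf
  refine HasDerivAt.congr_deriv hhalf ?_
  ring

lemma lyap_contOn (hψ : ContDiff ℝ (⊤ : ℕ∞) ψf) (hδ : 0 < δ)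
    (hsupp : ∀ s ∈ Set.Icc s₁ s₂, ∀ y : E2, 1 - δ ≤ ‖y‖ →
      ptD ψf (s, y) = 0 ∧ ∀ i : Fin 2, pxD i ψf (s, y) = 0) :
    ContinuousOn (lyap m ψf) (Set.Icc s₁ s₂) := by
  set μ := (volume : Measure E2).restrict (Metric.ball (0:E2) 1) with hμdef
  haveI : IsFiniteMeasure μ := by
    constructor
    rw [hμdef, Measure.restrict_apply_univ]
    exact measure_ball_lt_top
  set r0 : ℝ := max (1 - δ) 0 with hr0def
  have hr01 : r0 < 1 := max_lt (by linarith) one_pos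
  have hmax : ∀ z : E2, r0 ≤ ‖z‖ → (1:ℝ) - δ ≤ ‖z‖ := fun z hz =>
    le_trans (le_max_left _ _) hz
  obtain ⟨CL, hCL0, hCL⟩ := bound_of_zero_outside (g := fun x y => Ld m ψf x y)
    (a := s₁) (b := s₂) hr01 (Ld_contOn hψ hr01)
    (fun x hx y hy => Ld_zero hsupp hx (hmax y hy))
  have hfun : (fun x => (1/2 : ℝ) * ∫ y, Ld m ψf x y ∂μ) = lyap m ψf := by
    funext x
    rw [hμdef]
    exact (lyap_eq_Ld m ψf x).symm
  rw [← hfun]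
  intro s₀ hs₀
  apply ContinuousWithinAt.const_smul (c := (1/2 : ℝ)) ?_ |>.congr (fun x _ => rfl) rfl
  exact continuousWithinAt_of_dominated
    (Filter.Eventually.of_forall (fun x =>
      (Ld_contOn_ball hψ x).aestronglyMeasurable measurableSet_ball))
    (Filter.Eventually.mono self_mem_nhdsWithin (fun x hx =>
      ae_of_all _ (fun y => by rw [Real.norm_eq_abs]; exact hCL x hx y)))
    (integrable_const CL)
    (ae_of_all _ (fun y => (Ld_cont_time hψ y).continuousWithinAt))

lemma fluxDen_nonneg (s : ℝ) : 0 ≤ fluxDen m ψf s := by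
  apply setIntegral_nonneg measurableSet_ball
  intro y hy
  simp only [Metric.mem_ball, dist_eq_norm, sub_zero] at hy
  apply mul_nonneg (pow_two_nonneg _)
  apply Real.rpow_nonneg
  nlinarith [norm_nonneg y]

lemma fluxDen_contOn (hψ : ContDiff ℝ (⊤ : ℕ∞) ψf) (hδ : 0 < δ)
    (hsupp : ∀ s ∈ Set.Icc s₁ s₂, ∀ y : E2, 1 - δ ≤ ‖y‖ →
      ptD ψf (s, y) = 0 ∧ ∀ i : Fin 2, pxD i ψf (s, y) = 0) :
    ContinuousOn (fluxDen m ψf) (Set.Icc s₁ s₂) := by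
  set μ := (volume : Measure E2).restrict (Metric.ball (0:E2) 1) with hμdef
  haveI : IsFiniteMeasure μ := by
    constructor
    rw [hμdef, Measure.restrict_apply_univ]
    exact measure_ball_lt_top
  set r0 : ℝ := max (1 - δ) 0 with hr0def
  have hr01 : r0 < 1 := max_lt (by linarith) one_pos
  have hmax : ∀ z : E2, r0 ≤ ‖z‖ → (1:ℝ) - δ ≤ ‖z‖ := fun z hz =>
    le_trans (le_max_left _ _) hz
  have hP : Continuous (fun p : ℝ × E2 => ptD ψf p) := (smooth_ptD hψ).continuous
  have hgcont : ContinuousOn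
      (fun p : ℝ × E2 => ‖ptD ψf p‖^2 * kap p.2)
      (Set.Icc s₁ s₂ ×ˢ Metric.closedBall 0 r0) := by
    apply ContinuousOn.mul ((hP.norm.pow 2).continuousOn)
    intro p hp
    have hy : ‖p.2‖ < 1 := by
      have := hp.2
      simp only [Metric.mem_closedBall, dist_eq_norm, sub_zero] at this
      linarith
    exact ((contDiffAt_kap hy).continuousAt.comp continuousAt_snd).continuousWithinAt
  obtain ⟨C, hC0, hC⟩ := bound_of_zero_outside
    (g := fun x y => ‖ptD ψf (x, y)‖^2 * kap y) (a := s₁) (b := s₂) hr01 hgcont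
    (fun x hx y hy => by
      show ‖ptD ψf (x, y)‖^2 * kap y = 0
      rw [(hsupp x hx y (hmax y hy)).1]; simp)
  intro s₀ hs₀
  have hres : ∀ x : ℝ, ContinuousOn (fun y : E2 => ‖ptD ψf (x, y)‖^2 * kap y)
      (Metric.ball (0:E2) 1) := by
    intro x
    apply ContinuousOn.mul
    · exact (((smooth_ptD hψ).continuous.comp
        (continuous_const.prodMk continuous_id)).norm.pow 2).continuousOn
    · intro y hy
      simp only [Metric.mem_ball, dist_eq_norm, sub_zero] at hy
      exact (contDiffAt_kap hy).continuousAt.continuousWithinAt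
  have : ContinuousWithinAt (fun x => ∫ y, ‖ptD ψf (x, y)‖^2 * kap y ∂μ)
      (Set.Icc s₁ s₂) s₀ := by
    exact continuousWithinAt_of_dominated
      (Filter.Eventually.of_forall (fun x =>
        (hres x).aestronglyMeasurable measurableSet_ball))
      (Filter.Eventually.mono self_mem_nhdsWithin (fun x hx =>
        ae_of_all _ (fun y => by rw [Real.norm_eq_abs]; exact hC x hx y)))
      (integrable_const C)
      (ae_of_all _ (fun y => by
        have : Continuous (fun x : ℝ => ‖ptD ψf (x, y)‖^2 * kap y) :=
          (((smooth_ptD hψ).continuous.comp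
            (continuous_id.prodMk continuous_const)).norm.pow 2).mul continuous_const
        exact this.continuousWithinAt))
  exact this

end derivative

end spatial

/-- monotonicity of the self-similar Lyapunov functional:
`Ẽ(s₂) − Ẽ(s₁) = ∫_{s₁}^{s₂}∫_{B₁} |∂_sψ|²(1−|y|²)^{−3/2} dy ds`; in particular `Ẽ` is
non-decreasing. -/
theorem lyapunov_monotonicity (m : ℕ) (s₁ s₂ δ : ℝ) (hs₁ : 0 ≤ s₁) (h12 : s₁ < s₂)
    (hδ : 0 < δ) (ψf : ℝ × E2 → Em m) (hψ : ContDiff ℝ (⊤ : ℕ∞) ψf)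
    (hsph : ∀ s ∈ Set.Icc s₁ s₂, ∀ y : E2, ‖y‖ ≤ 1 → ‖ψf (s, y)‖ = 1)
    (hsupp : ∀ s ∈ Set.Icc s₁ s₂, ∀ y : E2, 1 - δ ≤ ‖y‖ →
      ptD ψf (s, y) = 0 ∧ ∀ i : Fin 2, pxD i ψf (s, y) = 0)
    (hEq : ∀ s ∈ Set.Icc s₁ s₂, ∀ y : E2, ‖y‖ < 1 →
      ptD (fun q => ptD ψf q) (s, y)
        = (rho y)⁻¹ •
            (∑ i : Fin 2, pxD i (fun q : ℝ × E2 =>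
                rho q.2 • pxD i ψf q
                  - (rho q.2 * q.2 i) • ∑ l : Fin 2, q.2 l • pxD l ψf q) (s, y))
          - (2:ℝ) • (∑ i : Fin 2, y i • pxD i (fun q => ptD ψf q) (s, y))
          - ptD ψf (s, y)
          + (‖ptD ψf (s, y) + ∑ i : Fin 2, y i • pxD i ψf (s, y)‖^2
              - ∑ i : Fin 2, ‖pxD i ψf (s, y)‖^2) • ψf (s, y)) :
    lyap m ψf s₂ - lyap m ψf s₁ = (∫ s in s₁..s₂, fluxDen m ψf s) ∧
    lyap m ψf s₁ ≤ lyap m ψf s₂ := by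
  have hcont := lyap_contOn (s₁ := s₁) (s₂ := s₂) hψ hδ hsupp
  have hflux := fluxDen_contOn (s₁ := s₁) (s₂ := s₂) hψ hδ hsupp
  have hii : IntervalIntegrable (fluxDen m ψf) volume s₁ s₂ := by
    apply ContinuousOn.intervalIntegrable
    rwa [Set.uIcc_of_le h12.le]
  have hkey := intervalIntegral.integral_eq_sub_of_hasDeriv_right_of_le h12.le hcont
    (fun x hx => (lyap_hasDerivAt hψ hδ hsph hsupp hEq hx).hasDerivWithinAt) hii
  have hnn : 0 ≤ ∫ s in s₁..s₂, fluxDen m ψf s :=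
    intervalIntegral.integral_nonneg h12.le (fun u _ => fluxDen_nonneg u)
  exact ⟨by linarith, by linarith⟩

end
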